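/- For every real number r > 0, the function x ↦ log((sinh x)/x) / log(r²/(r² − x²)) is strictly decreasing on the open interval (0, r). -/

import Mathlib

open Real Set


lemma aux_u_deriv (x : ℝ) : HasDerivAt (fun x : ℝ => x * Real.cosh x - Real.sinh x)
    (x * Real.sinh x) x := by
  have h := ((hasDerivAt_id x).mul (Real.hasDerivAt_cosh x)).sub (Real.hasDerivAt_sinh x)
  exact h.congr_deriv (by simp only [id_eq]; ring)

lemma aux_u_mono : StrictMonoOn (fun x : ℝ => x * Real.cosh x - Real.sinh x) (Ici 0) := by
  apply strictMonoOn_of_deriv_pos (convex_Ici 0)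
  · exact (Continuous.continuousOn (by continuity))
  · intro x hx
    rw [interior_Ici] at hx
    rw [(aux_u_deriv x).deriv]
    exact mul_pos hx (Real.sinh_pos_iff.2 hx)

lemma aux_sinh_lt {x : ℝ} (hx : 0 < x) : Real.sinh x < x * Real.cosh x := by
  have := aux_u_mono self_mem_Ici (le_of_lt hx : (0:ℝ) ≤ x) hx
  simpa using this

lemma aux_sinh_le {x : ℝ} (hx : 0 ≤ x) : Real.sinh x ≤ x * Real.cosh x := by
  rcases eq_or_lt_of_le hx with h | h
  · simp [← h]
  · exact (aux_sinh_lt h).le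

noncomputable def q2fn (x : ℝ) : ℝ :=
  2 + 4*x*Real.sinh x*Real.cosh x - 2*(Real.cosh x)^2 - 2*(Real.sinh x)^2

noncomputable def q1fn (x : ℝ) : ℝ :=
  2*x + x*(Real.cosh x)^2 + x*(Real.sinh x)^2 - 3*Real.sinh x*Real.cosh x

noncomputable def qfn (x : ℝ) : ℝ :=
  x^2 + x*Real.sinh x*Real.cosh x - 2*(Real.sinh x)^2

lemma q2_deriv (x : ℝ) : HasDerivAt q2fn
    (4*(x*(Real.cosh x)^2 + x*(Real.sinh x)^2 - Real.sinh x * Real.cosh x)) x := by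
  unfold q2fn
  have h := ((((hasDerivAt_const x (4:ℝ)).mul (hasDerivAt_id x)).mul (Real.hasDerivAt_sinh x)).mul
      (Real.hasDerivAt_cosh x))
  have H := (((hasDerivAt_const x (2:ℝ)).add h).sub
      ((hasDerivAt_const x (2:ℝ)).mul ((Real.hasDerivAt_cosh x).pow 2))).sub
    ((hasDerivAt_const x (2:ℝ)).mul ((Real.hasDerivAt_sinh x).pow 2))
  exact H.congr_deriv (by simp only [id_eq, Pi.mul_apply, Pi.pow_apply]; push_cast; ring)

lemma q1_deriv (x : ℝ) : HasDerivAt q1fn (q2fn x) x := by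
  unfold q1fn q2fn
  have H := ((((hasDerivAt_const x (2:ℝ)).mul (hasDerivAt_id x)).add
      ((hasDerivAt_id x).mul ((Real.hasDerivAt_cosh x).pow 2))).add
      ((hasDerivAt_id x).mul ((Real.hasDerivAt_sinh x).pow 2))).sub
    (((hasDerivAt_const x (3:ℝ)).mul (Real.hasDerivAt_sinh x)).mul (Real.hasDerivAt_cosh x))
  exact H.congr_deriv (by simp only [id_eq, Pi.mul_apply, Pi.pow_apply]; push_cast; ring)

lemma q_deriv (x : ℝ) : HasDerivAt qfn (q1fn x) x := by
  unfold qfn q1fn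
  have H := ((hasDerivAt_pow 2 x).add
      (((hasDerivAt_id x).mul (Real.hasDerivAt_sinh x)).mul (Real.hasDerivAt_cosh x))).sub
    ((hasDerivAt_const x (2:ℝ)).mul ((Real.hasDerivAt_sinh x).pow 2))
  exact H.congr_deriv (by simp only [id_eq, Pi.mul_apply, Pi.pow_apply]; push_cast; ring)

lemma q2_nonneg {x : ℝ} (hx : 0 ≤ x) : 0 ≤ q2fn x := by
  have hmono : MonotoneOn q2fn (Ici 0) := by
    apply monotoneOn_of_deriv_nonneg (convex_Ici 0)
    · exact Continuous.continuousOn (by unfold q2fn; continuity)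
    · exact fun y _ => (q2_deriv y).differentiableAt.differentiableWithinAt
    · intro y hy
      rw [interior_Ici] at hy
      rw [(q2_deriv y).deriv]
      have h1 : Real.sinh y ≤ y * Real.cosh y := aux_sinh_le hy.le
      have h2 : 0 < Real.cosh y := Real.cosh_pos y
      have h3 : 0 < Real.sinh y := Real.sinh_pos_iff.2 hy
      nlinarith
  have := hmono self_mem_Ici hx hx
  simpa [q2fn, Real.cosh_sq_sub_sinh_sq] using this

lemma q1_nonneg {x : ℝ} (hx : 0 ≤ x) : 0 ≤ q1fn x := by
  have hmono : MonotoneOn q1fn (Ici 0) := by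
    apply monotoneOn_of_deriv_nonneg (convex_Ici 0)
    · exact Continuous.continuousOn (by unfold q1fn; continuity)
    · exact fun y _ => (q1_deriv y).differentiableAt.differentiableWithinAt
    · intro y hy
      rw [interior_Ici] at hy
      rw [(q1_deriv y).deriv]
      exact q2_nonneg hy.le
  have := hmono self_mem_Ici hx hx
  simpa [q1fn] using this

lemma q_nonneg {x : ℝ} (hx : 0 ≤ x) : 0 ≤ qfn x := by
  have hmono : MonotoneOn qfn (Ici 0) := by
    apply monotoneOn_of_deriv_nonneg (convex_Ici 0)
    · exact Continuous.continuousOn (by unfold qfn; continuity)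
    · exact fun y _ => (q_deriv y).differentiableAt.differentiableWithinAt
    · intro y hy
      rw [interior_Ici] at hy
      rw [(q_deriv y).deriv]
      exact q1_nonneg hy.le
  have := hmono self_mem_Ici hx hx
  simpa [qfn] using this

noncomputable def Ffn (x : ℝ) : ℝ :=
  (x * Real.cosh x - Real.sinh x) / (x^2 * Real.sinh x)

lemma F_pos {x : ℝ} (hx : 0 < x) : 0 < Ffn x := by
  apply div_pos (by nlinarith [aux_sinh_lt hx])
  exact mul_pos (by positivity) (Real.sinh_pos_iff.2 hx)

lemma F_deriv {x : ℝ} (hx : 0 < x) : HasDerivAt Ffn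
    ((x * Real.sinh x * (x^2 * Real.sinh x) - (x * Real.cosh x - Real.sinh x) *
      (2*x*Real.sinh x + x^2 * Real.cosh x)) / (x^2 * Real.sinh x)^2) x := by
  unfold Ffn
  have hs : 0 < Real.sinh x := Real.sinh_pos_iff.2 hx
  have hN : HasDerivAt (fun x : ℝ => x * Real.cosh x - Real.sinh x) (x * Real.sinh x) x := by
    have h := ((hasDerivAt_id x).mul (Real.hasDerivAt_cosh x)).sub (Real.hasDerivAt_sinh x)
    exact h.congr_deriv (by simp only [id_eq]; ring)
  have hD : HasDerivAt (fun x : ℝ => x^2 * Real.sinh x)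
      (2*x*Real.sinh x + x^2 * Real.cosh x) x := by
    have h := (hasDerivAt_pow 2 x).mul (Real.hasDerivAt_sinh x)
    exact h.congr_deriv (by push_cast; ring)
  exact hN.div hD (by positivity)

lemma F_anti : AntitoneOn Ffn (Ioi 0) := by
  apply antitoneOn_of_deriv_nonpos (convex_Ioi 0)
  · intro x hx
    exact ((F_deriv hx).continuousAt).continuousWithinAt
  · intro x hx
    rw [interior_Ioi] at hx
    exact (F_deriv hx).differentiableAt.differentiableWithinAt
  · intro x hx
    rw [interior_Ioi] at hx
    rw [(F_deriv hx).deriv]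
    apply div_nonpos_of_nonpos_of_nonneg _ (by positivity)
    have hq : 0 ≤ x^2 + x*Real.sinh x*Real.cosh x - 2*(Real.sinh x)^2 := q_nonneg hx.le
    have hx0 : (0:ℝ) < x := hx
    have key : x * Real.sinh x * (x^2*Real.sinh x) - (x*Real.cosh x - Real.sinh x)*(2*x*Real.sinh x + x^2*Real.cosh x)
        = -(x*(x^2 + x*Real.sinh x*Real.cosh x - 2*(Real.sinh x)^2)) - x^3*((Real.cosh x)^2 - (Real.sinh x)^2 - 1) := by
      ring
    rw [key, Real.cosh_sq_sub_sinh_sq]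
    nlinarith [mul_nonneg hx0.le hq]


lemma f_hasDeriv {x : ℝ} (hx : 0 < x) :
    HasDerivAt (fun x : ℝ => Real.log (Real.sinh x / x)) (x * Ffn x) x := by
  have hs : 0 < Real.sinh x := Real.sinh_pos_iff.2 hx
  have h1 : HasDerivAt (fun x : ℝ => Real.sinh x / x)
      ((Real.cosh x * x - Real.sinh x * 1) / x ^ 2) x :=
    (Real.hasDerivAt_sinh x).div (hasDerivAt_id x) hx.ne'
  have h2 := h1.log (div_ne_zero hs.ne' hx.ne')
  refine h2.congr_deriv ?_
  unfold Ffn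
  field_simp

lemma g_hasDeriv {r x : ℝ} (hr : 0 < r) (hx : 0 < x) (hxr : x < r) :
    HasDerivAt (fun x : ℝ => Real.log (r ^ 2 / (r ^ 2 - x ^ 2)))
      (2 * x / (r ^ 2 - x ^ 2)) x := by
  have hden : 0 < r ^ 2 - x ^ 2 := by nlinarith
  have hD : HasDerivAt (fun x : ℝ => r ^ 2 - x ^ 2) (0 - (2:ℕ) * x ^ (2 - 1)) x :=
    (hasDerivAt_const x (r ^ 2)).sub (hasDerivAt_pow 2 x)
  have hQ := (hasDerivAt_const x (r ^ 2)).div hD hden.ne'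
  have hval : (0:ℝ) < r ^ 2 / (r ^ 2 - x ^ 2) := by positivity
  have hL := hQ.log hval.ne'
  refine hL.congr_deriv ?_
  have hr2 : r ^ 2 ≠ 0 := by positivity
  simp only [Pi.div_apply]
  field_simp
  ring

set_option maxHeartbeats 1000000 in
theorem stmt_11 (r : ℝ) (hr : 0 < r) :
    StrictAntiOn
      (fun x : ℝ => Real.log (Real.sinh x / x) / Real.log (r ^ 2 / (r ^ 2 - x ^ 2)))
      (Set.Ioo 0 r) := by
  set f : ℝ → ℝ := fun x => Real.log (Real.sinh x / x) with hf
  set g : ℝ → ℝ := fun x => Real.log (r ^ 2 / (r ^ 2 - x ^ 2)) with hg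
  set f' : ℝ → ℝ := fun x => x * Ffn x with hf'
  set g' : ℝ → ℝ := fun x => 2 * x / (r ^ 2 - x ^ 2) with hg'
  -- basic facts
  have hf0 : f 0 = 0 := by simp [hf]
  have hg0 : g 0 = 0 := by
    show Real.log (r ^ 2 / (r ^ 2 - 0 ^ 2)) = 0
    rw [show r ^ 2 - 0 ^ 2 = r ^ 2 by ring, div_self (by positivity : (r:ℝ) ^ 2 ≠ 0),
      Real.log_one]
  have hgpos : ∀ x : ℝ, 0 < x → x < r → 0 < g x := by
    intro x hx hxr
    have hden : 0 < r ^ 2 - x ^ 2 := by nlinarith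
    apply Real.log_pos
    rw [lt_div_iff₀ hden]
    nlinarith
  have hgmono : ∀ x y : ℝ, 0 ≤ x → x < y → y < r → g x < g y := by
    intro x y hx hxy hyr
    have hdy : 0 < r ^ 2 - y ^ 2 := by nlinarith
    have hdx : 0 < r ^ 2 - x ^ 2 := by nlinarith
    apply Real.log_lt_log (by positivity)
    apply div_lt_div_of_pos_left (by positivity) hdy
    nlinarith
  have hgcont : ∀ a ∈ Ioo 0 r, ContinuousOn g (Icc 0 a) := by
    intro a ha
    intro x hx
    have hden : 0 < r ^ 2 - x ^ 2 := by
      rcases hx with ⟨h1, h2⟩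
      nlinarith [ha.2]
    apply ContinuousAt.continuousWithinAt
    apply Real.continuousAt_log (by positivity)
      |>.comp
    exact (continuousAt_const.div (by fun_prop) hden.ne')
  have hfcont : ∀ a : ℝ, 0 < a → ContinuousOn f (Icc 0 a) := by
    intro a ha x hx
    rcases eq_or_lt_of_le hx.1 with h0 | h0
    · -- x = 0
      subst h0
      have hsub : Icc (0:ℝ) a ⊆ insert 0 (Ioc 0 a) := by
        intro y hy
        rcases eq_or_lt_of_le hy.1 with h | h
        · exact Or.inl h.symm
        · exact Or.inr ⟨h, hy.2⟩
      apply ContinuousWithinAt.mono _ hsub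
      rw [continuousWithinAt_insert_self]
      have hslope : Filter.Tendsto (fun x : ℝ => Real.sinh x / x) (nhdsWithin 0 (Ioc 0 a))
          (nhds 1) := by
        have h := hasDerivAt_iff_tendsto_slope.mp (Real.hasDerivAt_sinh 0)
        rw [Real.cosh_zero] at h
        have hle : nhdsWithin (0:ℝ) (Ioc 0 a) ≤ nhdsWithin 0 {(0:ℝ)}ᶜ :=
          nhdsWithin_mono 0 (fun y hy => ne_of_gt hy.1)
        have h2 := h.mono_left hle
        refine h2.congr ?_
        intro y
        simp [slope_def_field, div_eq_div_iff]
      have hlog : Filter.Tendsto Real.log (nhds 1) (nhds 0) := by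
        have := (Real.continuousAt_log one_ne_zero).tendsto
        simpa using this
      have := hlog.comp hslope
      unfold ContinuousWithinAt
      rw [hf0]
      exact this
    · -- x > 0
      exact ((f_hasDeriv h0).continuousAt).continuousWithinAt
  -- main argument
  intro a ha b hb hab
  simp only
  have hga : 0 < g a := hgpos a ha.1 ha.2
  have hgb : 0 < g b := hgpos b hb.1 hb.2
  rw [div_lt_div_iff₀ hgb hga]
  -- MVT on [0, a]
  obtain ⟨c, hc, heq1⟩ := exists_ratio_hasDerivAt_eq_ratio_slope f f' (show (0:ℝ) < a from ha.1)
    (hfcont a ha.1) (fun x hx => f_hasDeriv hx.1)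
    g g' (hgcont a ha) (fun x hx => g_hasDeriv hr hx.1 (hx.2.trans ha.2))
  rw [hf0, hg0, sub_zero, sub_zero] at heq1
  -- MVT on [a, b]
  have hfcont2 : ContinuousOn f (Icc a b) :=
    (hfcont b hb.1).mono (Icc_subset_Icc ha.1.le le_rfl)
  have hgcont2 : ContinuousOn g (Icc a b) :=
    (hgcont b hb).mono (Icc_subset_Icc ha.1.le le_rfl)
  obtain ⟨d, hd, heq2⟩ := exists_ratio_hasDerivAt_eq_ratio_slope f f' hab
    hfcont2 (fun x hx => f_hasDeriv (ha.1.trans hx.1))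
    g g' hgcont2 (fun x hx => g_hasDeriv hr (ha.1.trans hx.1) (hx.2.trans hb.2))
  -- positivity data
  have hc0 : 0 < c := hc.1
  have hd0 : 0 < d := ha.1.trans hd.1
  have hcd : c < d := hc.2.trans hd.1
  have hcr : c < r := hc.2.trans ha.2
  have hdr : d < r := hd.2.trans hb.2
  have hdenc : 0 < r ^ 2 - c ^ 2 := by nlinarith
  have hdend : 0 < r ^ 2 - d ^ 2 := by nlinarith
  have hgc0 : 0 < g' c := by
    show 0 < 2 * c / (r ^ 2 - c ^ 2); positivity
  have hgd0 : 0 < g' d := by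
    show 0 < 2 * d / (r ^ 2 - d ^ 2); positivity
  -- key ratio inequality : f' d * g' c < f' c * g' d
  have hkey : Ffn d * (r ^ 2 - d ^ 2) < Ffn c * (r ^ 2 - c ^ 2) := by
    have h1 : Ffn d * (r ^ 2 - d ^ 2) < Ffn d * (r ^ 2 - c ^ 2) := by
      apply mul_lt_mul_of_pos_left _ (F_pos hd0)
      nlinarith
    have h2 : Ffn d * (r ^ 2 - c ^ 2) ≤ Ffn c * (r ^ 2 - c ^ 2) :=
      mul_le_mul_of_nonneg_right (F_anti hc0 (Set.mem_Ioi.mpr hd0) hcd.le) hdenc.le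
    exact h1.trans_le h2
  have hratio : f' d * g' c < f' c * g' d := by
    show d * Ffn d * (2 * c / (r ^ 2 - c ^ 2)) < c * Ffn c * (2 * d / (r ^ 2 - d ^ 2))
    rw [mul_div_assoc', mul_div_assoc', div_lt_div_iff₀ hdenc hdend]
    have hcd2 : 0 < 2 * c * d := by positivity
    nlinarith [mul_lt_mul_of_pos_left hkey hcd2]
  -- combine
  have hgba : 0 < g b - g a := sub_pos.2 (hgmono a b ha.1.le hab hb.2)
  have step := mul_lt_mul_of_pos_right hratio (mul_pos hga hgba)
  have lhs_eq : f' d * g' c * (g a * (g b - g a)) = (f b - f a) * g' d * g' c * g a := by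
    linear_combination (g' c * g a) * heq2
  have rhs_eq : f' c * g' d * (g a * (g b - g a)) = f a * (g' c) * g' d * (g b - g a) := by
    linear_combination (g' d * (g b - g a)) * heq1
  rw [lhs_eq, rhs_eq] at step
  have step2 : ((f b - f a) * g a) * (g' d * g' c) < (f a * (g b - g a)) * (g' d * g' c) := by
    nlinarith [step]
  have step3 := lt_of_mul_lt_mul_right step2 (mul_pos hgd0 hgc0).le
  show f b * g a < f a * g b
  nlinarith [step3]
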